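/- Let G = (V, E) be a finite DAG and let s be a vertex with no incoming edges such that every vertex of G is reachable from s by a directed path. Define W : E → ℝ by W(e) = 1 if the tail of e is s, and W(e) = 1/|inc(v)| if the tail of e is a vertex v ≠ s. Then the edge path-sum satisfies α_e(W) = 1 for every edge e ∈ E. -/

import Mathlib

/-- `IsPathFrom tail head u v p` means the list of edges `p` is a directed path
from vertex `u` to vertex `v`. The empty path goes from `u` to `u`. -/
def IsPathFrom {V E : Type} (tail head : E → V) : V → V → List E → Prop
  | u, v, [] => u = v
  | u, v, e :: es => tail e = u ∧ IsPathFrom tail head (head e) v es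

/-- A directed graph is acyclic if the only directed path from a vertex to itself
is the empty path. -/
def Acyclic {V E : Type} (tail head : E → V) : Prop :=
  ∀ (v : V) (p : List E), IsPathFrom tail head v v p → p = []

/-- The weight of a path is the product of the weights of its edges. -/
def pathWeight {E : Type} (W : E → ℝ) (p : List E) : ℝ := (p.map W).prod

/-- The edge path-sum `α_e(W)`: the sum of the weights of all directed paths
starting at the source `s` whose last edge is `e`. -/
noncomputable def edgeAlpha {V E : Type} (tail head : E → V) (W : E → ℝ) (s : V) (e : E) : ℝ :=
  ∑ᶠ p ∈ {p : List E | IsPathFrom tail head s (head e) p ∧ p.getLast? = some e},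
    pathWeight W p


section Aux

variable {V E : Type} (tail head : E → V)

lemma isPathFrom_append {u v w : V} :
    ∀ {p q : List E}, IsPathFrom tail head u v p → IsPathFrom tail head v w q →
      IsPathFrom tail head u w (p ++ q) := by
  intro p
  induction p generalizing u with
  | nil => intro q hp hq; cases hp; simpa using hq
  | cons a as ih =>
      intro q hp hq
      exact ⟨hp.1, ih hp.2 hq⟩

lemma isPathFrom_concat {u : V} (e : E) {p : List E}
    (hp : IsPathFrom tail head u (tail e) p) :
    IsPathFrom tail head u (head e) (p ++ [e]) :=
  isPathFrom_append tail head hp ⟨rfl, rfl⟩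

lemma isPathFrom_last {v : V} {e : E} :
    ∀ {p : List E} {u : V}, IsPathFrom tail head u v p → p.getLast? = some e →
      head e = v ∧ IsPathFrom tail head u (tail e) p.dropLast ∧ p = p.dropLast ++ [e] := by
  intro p
  induction p with
  | nil => intro u _ h; simp at h
  | cons a as ih =>
      intro u hp hl
      cases as with
      | nil =>
          simp only [List.getLast?_singleton, Option.some.injEq] at hl
          subst hl
          exact ⟨hp.2, by simpa [IsPathFrom] using hp.1.symm, by simp⟩
      | cons b bs =>
          have hl' : (b :: bs).getLast? = some e := by
            simpa [List.getLast?_cons_cons] using hl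
          obtain ⟨h1, h2, h3⟩ := ih hp.2 hl'
          refine ⟨h1, ⟨hp.1, ?_⟩, ?_⟩
          · simpa [List.dropLast_cons_of_ne_nil] using h2
          · show a :: (b :: bs) = (a :: (b::bs)).dropLast ++ [e]
            rw [List.dropLast_cons_of_ne_nil (by simp)]
            simpa using congrArg (a :: ·) h3

/-- The relation "there is a nonempty path from `u` to `v`". -/
def PathRel (u v : V) : Prop := ∃ p : List E, p ≠ [] ∧ IsPathFrom tail head u v p

lemma pathRel_wf [Finite V] (hacyc : Acyclic tail head) :
    WellFounded (PathRel tail head) := by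
  have : IsTrans V (PathRel tail head) := ⟨by
    rintro a b c ⟨p, hp, hpp⟩ ⟨q, hq, hqq⟩
    exact ⟨p ++ q, by simp [hp], isPathFrom_append tail head hpp hqq⟩⟩
  have : IsIrrefl V (PathRel tail head) := ⟨by
    rintro a ⟨p, hp, hpp⟩
    exact hp (hacyc a p hpp)⟩
  exact Finite.wellFounded_of_trans_of_irrefl _

lemma pathsTo_finite [Finite V] [Finite E] (hacyc : Acyclic tail head) (s : V) (v : V) :
    {p : List E | IsPathFrom tail head s v p}.Finite := by
  induction v using (pathRel_wf tail head hacyc).induction with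
  | _ v ih =>
    have hsub : {p : List E | IsPathFrom tail head s v p} ⊆
        insert [] (⋃ e ∈ {e : E | head e = v},
          (fun q : List E => q ++ [e]) '' {p | IsPathFrom tail head s (tail e) p}) := by
      intro p hp
      rcases List.eq_nil_or_concat p with rfl | ⟨q, e, rfl⟩
      · exact Set.mem_insert _ _
      · simp only [List.concat_eq_append] at hp ⊢
        have hl : (q ++ [e]).getLast? = some e := by simp
        obtain ⟨h1, h2, h3⟩ := isPathFrom_last tail head hp hl
        right
        refine Set.mem_biUnion h1 ⟨(q ++ [e]).dropLast, h2, h3.symm⟩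
    refine Set.Finite.subset (Set.Finite.insert _ ?_) hsub
    refine Set.Finite.biUnion (Set.toFinite _) ?_
    intro e he
    exact Set.Finite.image _ (ih (tail e) ⟨[e], by simp, ⟨rfl, he⟩⟩)

end Aux

section Main

variable {V E : Type} [Fintype V] [Fintype E] [DecidableEq V] (tail head : E → V)
  (hacyc : Acyclic tail head) (s : V) (W : E → ℝ)

/-- vertex path-sum -/
noncomputable def beta (v : V) : ℝ :=
  ∑ᶠ p ∈ {p : List E | IsPathFrom tail head s v p}, pathWeight W p

include hacyc in
lemma edgeAlpha_eq (e : E) :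
    edgeAlpha tail head W s e = beta tail head s W (tail e) * W e := by
  have hset : {p : List E | IsPathFrom tail head s (head e) p ∧ p.getLast? = some e} =
      (fun q : List E => q ++ [e]) '' {p | IsPathFrom tail head s (tail e) p} := by
    ext p
    constructor
    · rintro ⟨hp, hl⟩
      obtain ⟨h1, h2, h3⟩ := isPathFrom_last tail head hp hl
      exact ⟨p.dropLast, h2, h3.symm⟩
    · rintro ⟨q, hq, rfl⟩
      exact ⟨isPathFrom_concat tail head e hq, by simp⟩
  rw [edgeAlpha, hset, finsum_mem_image (by intro a _ b _ h; simpa using h)]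
  have hfin := pathsTo_finite tail head hacyc s (tail e)
  rw [beta, ← hfin.coe_toFinset, finsum_mem_coe_finset, finsum_mem_coe_finset,
    Finset.sum_mul]
  exact Finset.sum_congr rfl fun p _ => by simp [pathWeight]

omit [Fintype V] [Fintype E] [DecidableEq V] in
include hacyc in
lemma beta_source : beta tail head s W s = 1 := by
  have : {p : List E | IsPathFrom tail head s s p} = {([] : List E)} := by
    ext p
    constructor
    · exact fun hp => hacyc s p hp
    · rintro rfl; exact rfl
  rw [beta, this, finsum_mem_singleton]
  simp [pathWeight]

include hacyc in
lemma beta_ne_source (v : V) (hv : v ≠ s) :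
    beta tail head s W v = ∑ e ∈ Finset.univ.filter (fun e : E => head e = v),
      edgeAlpha tail head W s e := by
  classical
  have hsplit : {p : List E | IsPathFrom tail head s v p} =
      ⋃ e ∈ ((Finset.univ.filter (fun e : E => head e = v) : Finset E) : Set E),
        {p : List E | IsPathFrom tail head s (head e) p ∧ p.getLast? = some e} := by
    ext p
    constructor
    · intro hp
      rcases List.eq_nil_or_concat p with rfl | ⟨q, e, rfl⟩
      · exact absurd hp.symm hv
      · simp only [List.concat_eq_append] at hp ⊢
        have hl : (q ++ [e]).getLast? = some e := by simp
        obtain ⟨h1, _, _⟩ := isPathFrom_last tail head (e := e) hp hl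
        exact Set.mem_biUnion (by simp [h1]) ⟨h1 ▸ hp, hl⟩
    · intro hp
      simp only [Set.mem_iUnion] at hp
      obtain ⟨e, he, hp, _⟩ := hp
      simp only [Finset.coe_filter, Set.mem_setOf_eq, Finset.mem_univ, true_and] at he
      exact he ▸ hp
  rw [beta, hsplit, finsum_mem_biUnion]
  · rw [finsum_mem_coe_finset]
    rfl
  · intro a _ b _ hab
    refine Set.disjoint_left.mpr ?_
    rintro p ⟨_, hpa⟩ ⟨_, hpb⟩
    exact hab (by rw [hpa] at hpb; exact Option.some.inj hpb)
  · exact (Finset.univ.filter (fun e : E => head e = v) : Finset E).finite_toSet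
  · intro e he
    simp only [Finset.coe_filter, Set.mem_setOf_eq, Finset.mem_univ, true_and] at he
    refine Set.Finite.subset (pathsTo_finite tail head hacyc s v) ?_
    rintro p ⟨hp, _⟩
    exact he ▸ hp

end Main

/-- In a finite DAG with a source `s` having no incoming edges and from which every
vertex is reachable, the weight function `W(e) = 1` if `tail e = s` and
`W(e) = 1/|inc(tail e)|` otherwise achieves edge path-sums `α_e(W) = 1` for every
edge `e`. -/
theorem edgeAlpha_eq_one_of_uniform_weights {V E : Type} [Fintype V] [Fintype E]
    [DecidableEq V] (tail head : E → V) (hacyc : Acyclic tail head)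
    (s : V) (hs : ∀ e : E, head e ≠ s)
    (hreach : ∀ v : V, ∃ p : List E, IsPathFrom tail head s v p)
    (W : E → ℝ)
    (hW : ∀ e : E,
      W e = if tail e = s then 1 else 1 / (Nat.card {e' : E // head e' = tail e} : ℝ)) :
    ∀ e : E, edgeAlpha tail head W s e = 1 := by
  classical
  -- incoming edge count
  set inc : V → Finset E := fun v => Finset.univ.filter (fun e : E => head e = v) with hinc
  have hcard : ∀ v : V, (Nat.card {e' : E // head e' = v} : ℝ) = ((inc v).card : ℝ) := by
    intro v
    rw [Nat.card_eq_fintype_card, Fintype.card_subtype]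
  have hpos : ∀ v : V, v ≠ s → 0 < (inc v).card := by
    intro v hv
    obtain ⟨p, hp⟩ := hreach v
    rcases List.eq_nil_or_concat p with rfl | ⟨q, e, rfl⟩
    · exact absurd hp.symm hv
    · simp only [List.concat_eq_append] at hp
      have hl : (q ++ [e]).getLast? = some e := by simp
      obtain ⟨h1, _, _⟩ := isPathFrom_last tail head (e := e) hp hl
      exact Finset.card_pos.mpr ⟨e, by simp [hinc, h1]⟩
  -- key: beta v = if v = s then 1 else card (inc v), by well-founded induction
  have hbeta : ∀ v : V, beta tail head s W v =
      if v = s then 1 else ((inc v).card : ℝ) := by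
    intro v
    induction v using (pathRel_wf tail head hacyc).induction with
    | _ v ih =>
      by_cases hv : v = s
      · rw [if_pos hv, hv, beta_source tail head hacyc s W]
      · rw [if_neg hv, beta_ne_source tail head hacyc s W v hv]
        rw [show ∑ e ∈ Finset.univ.filter (fun e : E => head e = v),
              edgeAlpha tail head W s e
            = ∑ e ∈ inc v, (1 : ℝ) from ?_]
        · simp
        refine Finset.sum_congr rfl fun e he => ?_
        have hev : head e = v := by simpa [hinc] using he
        have hrel : PathRel tail head (tail e) v := ⟨[e], by simp, ⟨rfl, hev⟩⟩
        rw [edgeAlpha_eq tail head hacyc s W e, ih (tail e) hrel, hW e]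
        by_cases hte : tail e = s
        · simp [hte]
        · rw [if_neg hte, if_neg hte, hcard (tail e)]
          have : ((inc (tail e)).card : ℝ) ≠ 0 := by
            exact_mod_cast (hpos (tail e) hte).ne'
          field_simp
  intro e
  rw [edgeAlpha_eq tail head hacyc s W e, hbeta (tail e), hW e]
  by_cases hte : tail e = s
  · simp [hte]
  · rw [if_neg hte, if_neg hte, hcard (tail e)]
    have : ((inc (tail e)).card : ℝ) ≠ 0 := by
      exact_mod_cast (hpos (tail e) hte).ne'
    field_simp
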